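/- arXiv:2509.25006 — 2 statements merged into one kernel-verified Lean document; each statement's English description precedes it below -/
import Mathlib

section
/- Let C_2 be a cyclic group of order two acting trivially on the field F_2 with two elements. Then for every natural number n, the group homology H_n(C_2, F_2) is a one-dimensional vector space over F_2. -/
open CategoryTheory

noncomputable section

/-- `C₂`, a cyclic group of order two. -/
abbrev C2 : Type := Multiplicative (ZMod 2)

/-- The group algebra `𝔽₂[C₂]`. -/
abbrev F2C2 : Type := MonoidAlgebra (ZMod 2) C2

/-- The augmentation `𝔽₂[C₂] → 𝔽₂`, corresponding to the trivial action of `C₂` on `𝔽₂`. -/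
def augmentation : F2C2 →ₐ[ZMod 2] ZMod 2 :=
  MonoidAlgebra.lift (ZMod 2) (ZMod 2) C2 1

/-- The field `𝔽₂` with two elements, regarded as a trivial `C₂`-module, i.e. as a module
over the group algebra `𝔽₂[C₂]` via the augmentation. -/
def TrivialF2 : Type := ZMod 2

instance : AddCommGroup TrivialF2 := inferInstanceAs (AddCommGroup (ZMod 2))

instance : Module (ZMod 2) TrivialF2 := inferInstanceAs (Module (ZMod 2) (ZMod 2))

instance : Module F2C2 TrivialF2 := Module.compHom TrivialF2 augmentation.toRingHom

/-- Group homology `H_n(C₂, 𝔽₂)` of the cyclic group of order two with coefficients in the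
trivial module `𝔽₂`, defined as `Tor_n` over the group algebra `𝔽₂[C₂]`. -/
def groupHomologyC2F2 (n : ℕ) : ModuleCat F2C2 :=
  ((Tor (ModuleCat F2C2) n).obj (ModuleCat.of F2C2 TrivialF2)).obj
    (ModuleCat.of F2C2 TrivialF2)

namespace Aux

/-- the generator of C2 -/
def g : C2 := Multiplicative.ofAdd 1

lemma g_mul_g : g * g = 1 := by decide

lemma cases_C2 (c : C2) : c = 1 ∨ c = g := by revert c; decide

lemma g_ne_one : g ≠ 1 := by decide

/-- t = g - 1 = g + 1 -/
def t : F2C2 := MonoidAlgebra.single g 1 + MonoidAlgebra.single 1 1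

lemma aug_single (a : C2) (c : ZMod 2) : augmentation (MonoidAlgebra.single a c) = c := by
  simp [augmentation, MonoidAlgebra.lift_single]

lemma aug_t : augmentation t = 0 := by
  simp [t, aug_single]
  decide

lemma t_ne_zero : t ≠ 0 := by
  intro h
  have h2 : t.coeff g = 0 := by rw [h]; rfl
  rw [t, MonoidAlgebra.coeff_add, MonoidAlgebra.coeff_single, MonoidAlgebra.coeff_single, Finsupp.add_apply, Finsupp.single_eq_same,
    Finsupp.single_eq_of_ne' (by decide : (1:C2) ≠ g)] at h2
  simp at h2

lemma single_mul_t (a : C2) (c : ZMod 2) :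
    MonoidAlgebra.single a c * t = c • t := by
  rcases cases_C2 a with rfl | rfl
  · rw [show ((MonoidAlgebra.single (1 : C2) c) : F2C2) = c • 1 by
      simp [MonoidAlgebra.one_def, Finsupp.smul_single]]
    rw [smul_mul_assoc, one_mul]
  · simp only [t, mul_add, MonoidAlgebra.single_mul_single, g_mul_g, mul_one, smul_add]
    rw [MonoidAlgebra.smul_single, MonoidAlgebra.smul_single]
    simp only [smul_eq_mul, mul_one]
    abel

lemma mul_t (x : F2C2) : x * t = augmentation x • t := by
  induction x using MonoidAlgebra.induction with
  | zero => simp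
  | single_add a c f _ _ ih =>
      rw [add_mul, ih, map_add, add_smul]
      congr 1
      rw [single_mul_t, aug_single]

lemma t_mul_t : t * t = 0 := by
  rw [mul_t, aug_t, zero_smul]

lemma decomp (x : F2C2) :
    x = MonoidAlgebra.single 1 (x.coeff 1) + MonoidAlgebra.single g (x.coeff g) := by
  ext c
  rcases cases_C2 c with rfl | rfl
  · rw [MonoidAlgebra.coeff_add, MonoidAlgebra.coeff_single, MonoidAlgebra.coeff_single, Finsupp.add_apply, Finsupp.single_eq_same, Finsupp.single_eq_of_ne' g_ne_one, add_zero]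
  · rw [MonoidAlgebra.coeff_add, MonoidAlgebra.coeff_single, MonoidAlgebra.coeff_single, Finsupp.add_apply, Finsupp.single_eq_of_ne' (Ne.symm g_ne_one), Finsupp.single_eq_same,
      zero_add]

lemma aug_apply (x : F2C2) : augmentation x = x.coeff 1 + x.coeff g := by
  conv_lhs => rw [decomp x]
  rw [map_add, aug_single, aug_single]

lemma exists_of_aug_eq_zero (x : F2C2) (h : augmentation x = 0) :
    ∃ y : F2C2, y * t = x := by
  refine ⟨MonoidAlgebra.single 1 (x.coeff 1), ?_⟩
  rw [single_mul_t]
  rw [aug_apply] at h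
  have hg : x.coeff g = x.coeff 1 := by
    have h2 := h
    revert h2
    generalize x.coeff 1 = a
    generalize x.coeff g = b
    revert a b; decide
  conv_rhs => rw [decomp x]
  rw [hg]
  simp only [t, smul_add]
  rw [MonoidAlgebra.smul_single, MonoidAlgebra.smul_single]
  simp only [smul_eq_mul, mul_one]
  abel

lemma exists_of_mul_t_eq_zero (x : F2C2) (h : x * t = 0) :
    ∃ y : F2C2, y * t = x := by
  rw [mul_t] at h
  rcases eq_or_ne (augmentation x) 0 with h0 | h1
  · exact exists_of_aug_eq_zero x h0
  · exfalso
    have : augmentation x = 1 := by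
      revert h1; generalize augmentation x = c; revert c; decide
    rw [this, one_smul] at h
    exact t_ne_zero h

lemma aug_surjective : Function.Surjective (augmentation : F2C2 → ZMod 2) := by
  intro c
  exact ⟨MonoidAlgebra.single 1 c, aug_single 1 c⟩

/-! ## The periodic projective resolution -/

/-- identity map `ZMod 2 → TrivialF2`. -/
def toTriv (c : ZMod 2) : TrivialF2 := c

lemma smul_trivial (r : F2C2) (a : TrivialF2) : r • a = augmentation r • a := rfl

/-- multiplication by `t` as a morphism in `ModuleCat F2C2`. -/
def dHom : ModuleCat.of F2C2 F2C2 ⟶ ModuleCat.of F2C2 F2C2 :=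
  ModuleCat.ofHom (LinearMap.mulRight F2C2 t)

lemma dHom_apply (x : F2C2) : dHom x = x * t := rfl

/-- the periodic complex `⋯ → 𝔽₂[C₂] → 𝔽₂[C₂] → 𝔽₂[C₂]`. -/
def P : ChainComplex (ModuleCat F2C2) ℕ :=
  ChainComplex.of (fun _ => ModuleCat.of F2C2 F2C2) (fun _ => dHom)
    (fun _ => by
      refine ModuleCat.hom_ext (LinearMap.ext fun (x : F2C2) => ?_)
      show (x * t) * t = (0 : F2C2)
      rw [mul_assoc, t_mul_t, mul_zero])

lemma P_d (i : ℕ) : P.d (i + 1) i = dHom := by simp [P]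

/-- the augmentation as a morphism in `ModuleCat F2C2`. -/
def augHom : ModuleCat.of F2C2 F2C2 ⟶ ModuleCat.of F2C2 TrivialF2 :=
  ModuleCat.ofHom
  { toFun := fun x => toTriv (augmentation x)
    map_add' := fun x y => congrArg toTriv (map_add augmentation x y)
    map_smul' := fun r (x : F2C2) => by
      show toTriv (augmentation (r * x)) = r • toTriv (augmentation x)
      rw [map_mul, smul_trivial]
      rfl }

lemma augHom_apply (x : F2C2) : augHom x = toTriv (augmentation x) := rfl

lemma d_comp_augHom : P.d 1 0 ≫ augHom = 0 := by
  rw [show (1 : ℕ) = 0 + 1 from rfl, P_d]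
  refine ModuleCat.hom_ext (LinearMap.ext fun (x : F2C2) => ?_)
  show toTriv (augmentation (x * t)) = (0 : TrivialF2)
  rw [map_mul, aug_t, mul_zero]
  rfl

instance P_X_projective (n : ℕ) : Projective (P.X n) :=
  ModuleCat.projective_of_free (M := ModuleCat.of F2C2 F2C2)
    (Module.Basis.singleton PUnit.{1} F2C2)

/-- the morphism from the periodic complex to `𝔽₂` concentrated in degree 0. -/
def πP : P ⟶ (ChainComplex.single₀ (ModuleCat F2C2)).obj (ModuleCat.of F2C2 TrivialF2) :=
  (ChainComplex.toSingle₀Equiv P (ModuleCat.of F2C2 TrivialF2)).symm ⟨augHom, d_comp_augHom⟩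

lemma πP_f_zero : πP.f 0 = augHom := ChainComplex.toSingle₀Equiv_symm_apply_f_zero _ _

lemma P_exactAt_succ (n : ℕ) : P.ExactAt (n + 1) := by
  rw [HomologicalComplex.exactAt_iff' _ (n + 1 + 1) (n + 1) n (by simp) (by simp)]
  rw [ShortComplex.moduleCat_exact_iff]
  intro x hx
  dsimp [HomologicalComplex.sc', HomologicalComplex.shortComplexFunctor'] at x hx ⊢
  rw [P_d] at hx ⊢
  exact exists_of_mul_t_eq_zero x hx

/-- the projective resolution of the trivial module `𝔽₂`. -/
def res : ProjectiveResolution (ModuleCat.of F2C2 TrivialF2) where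
  complex := P
  projective := P_X_projective
  π := πP
  quasiIso := ⟨fun n => by
    cases n with
    | zero =>
        rw [ChainComplex.quasiIsoAt₀_iff, ShortComplex.quasiIso_iff_of_zeros']
        · constructor
          · rw [ShortComplex.moduleCat_exact_iff]
            intro x hx
            dsimp [HomologicalComplex.sc', HomologicalComplex.shortComplexFunctor'] at x hx ⊢
            rw [show P.d 1 0 = dHom from P_d 0]
            rw [πP_f_zero] at hx
            exact exists_of_aug_eq_zero x hx
          · rw [ModuleCat.epi_iff_surjective]
            intro c
            dsimp [HomologicalComplex.shortComplexFunctor']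
            rw [πP_f_zero]
            exact ⟨MonoidAlgebra.single 1 c, aug_single 1 c⟩
        all_goals rfl
    | succ n =>
        rw [quasiIsoAt_iff_exactAt']
        · exact P_exactAt_succ n
        · apply ChainComplex.exactAt_succ_single_obj⟩

/-! ## Computing the derived functor -/

/-- the functor `𝔽₂ ⊗ -`. -/
def F : ModuleCat F2C2 ⥤ ModuleCat F2C2 :=
  (MonoidalCategory.tensoringLeft (ModuleCat F2C2)).obj (ModuleCat.of F2C2 TrivialF2)

instance : F.Additive := by
  dsimp [F]; infer_instance

lemma F_map_dHom : F.map dHom = 0 := by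
  refine ModuleCat.hom_ext (TensorProduct.ext' fun (a : TrivialF2) (x : F2C2) => ?_)
  show (a ⊗ₜ[F2C2] (x * t) : TensorProduct F2C2 TrivialF2 F2C2) = 0
  rw [show (x * t : F2C2) = (x * t) • (1 : F2C2) by rw [smul_eq_mul, mul_one]]
  rw [TensorProduct.tmul_smul, TensorProduct.smul_tmul',
    show (x * t) • a = (0 : TrivialF2) by
      rw [smul_trivial, map_mul, aug_t, mul_zero, zero_smul]]
  rw [TensorProduct.zero_tmul]

/-- the complex `𝔽₂ ⊗ P`. -/
def MC : ChainComplex (ModuleCat F2C2) ℕ :=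
  (F.mapHomologicalComplex (ComplexShape.down ℕ)).obj P

lemma MC_d (i j : ℕ) : MC.d i j = 0 := by
  by_cases h : j + 1 = i
  · subst h
    show F.map (P.d (j + 1) j) = 0
    rw [P_d]; exact F_map_dHom
  · exact HomologicalComplex.shape _ _ _ h

/-- homology of a complex with zero differentials. -/
def homologyIsoX (n : ℕ) :
    (HomologicalComplex.homologyFunctor (ModuleCat F2C2) (ComplexShape.down ℕ) n).obj MC ≅
      MC.X n :=
  (ShortComplex.HomologyData.ofZeros (MC.sc n) (MC_d _ _) (MC_d _ _)).left.homologyIso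

/-- `𝔽₂ ⊗ 𝔽₂[C₂] ≅ 𝔽₂`. -/
def XIso (n : ℕ) : MC.X n ≅ ModuleCat.of F2C2 TrivialF2 :=
  (TensorProduct.rid F2C2 TrivialF2).toModuleIso

/-- The main computation: `H_n(C₂, 𝔽₂) ≅ 𝔽₂` as `𝔽₂[C₂]`-modules. -/
def torIso (n : ℕ) : groupHomologyC2F2 n ≅ ModuleCat.of F2C2 TrivialF2 :=
  res.isoLeftDerivedObj F n ≪≫ homologyIsoX n ≪≫ XIso n

open scoped ModuleCat in
/-- the trivial module, with the `ZMod 2`-module structure restricted from `𝔽₂[C₂]`,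
is still isomorphic to `ZMod 2`. -/
def finalEquiv : (ModuleCat.of F2C2 TrivialF2) ≃ₗ[ZMod 2] ZMod 2 :=
  { toFun := fun x => (x : ZMod 2)
    invFun := fun x => (x : TrivialF2)
    map_add' := fun _ _ => rfl
    map_smul' := fun c (x : TrivialF2) => by
      rfl
    left_inv := fun _ => rfl
    right_inv := fun _ => rfl }

end Aux

open scoped ModuleCat in
/-- For every natural number `n`, the group homology `H_n(C₂, 𝔽₂)` of the cyclic group of
order two with coefficients in the field `𝔽₂` with two elements, regarded as a trivial
`C₂`-module, is a one-dimensional `𝔽₂`-vector space. -/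
theorem groupHomology_C2_F2_one_dimensional (n : ℕ) :
    Module.finrank (ZMod 2) (groupHomologyC2F2 n) = 1 := by
  have e : (groupHomologyC2F2 n : Type) ≃ₗ[F2C2] (ModuleCat.of F2C2 TrivialF2 : Type) :=
    (Aux.torIso n).toLinearEquiv
  rw [(e.restrictScalars (ZMod 2)).finrank_eq, Aux.finalEquiv.finrank_eq]
  exact Module.finrank_self (ZMod 2)

end
end

section
/- Let C be the chain complex of abelian groups in which, for n ≥ 1, C_n is the free abelian group on the set of pairs (i, k) of integers with i ≥ 1, k ≥ 0, and i + 2k = n, C_0 = 0, and the differential d : C_n → C_{n-1} sends the generator (i, k) to 2·(i−1, k) if i is even and to 0 if i is odd. Then for every i ≥ 0 the homology H_{2i+1}(C) is isomorphic to (ℤ/2)^{i+1}, and for every i ≥ 1 the homology H_{2i}(C) is the zero group. -/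
open CategoryTheory

noncomputable section

/-- The set of generators in degree `n`: pairs `(i, k)` with `i ≥ 1`, `k ≥ 0` and
`i + 2k = n`. -/
abbrev S (n : ℕ) : Type := {p : ℕ × ℕ // 1 ≤ p.1 ∧ p.1 + 2 * p.2 = n}

/-- The differential, sending the generator `(i, k)` to `2·(i−1, k)` if `i` is even and
to `0` if `i` is odd. -/
def dLin (n : ℕ) : (S (n + 1) →₀ ℤ) →ₗ[ℤ] (S n →₀ ℤ) :=
  Finsupp.lsum ℤ fun p =>
    if h : p.1.1 % 2 = 0 then
      (2 : ℤ) • Finsupp.lsingle (⟨(p.1.1 - 1, p.1.2), by obtain ⟨h1, h2⟩ := p.2; omega⟩ : S n)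
    else 0

lemma dLin_single (n : ℕ) (p : S (n + 1)) (b : ℤ) :
    dLin n (Finsupp.single p b) =
      if h : p.1.1 % 2 = 0 then
        (2 : ℤ) • Finsupp.single
          (⟨(p.1.1 - 1, p.1.2), by obtain ⟨_, _⟩ := p.2; omega⟩ : S n) b
      else 0 := by
  simp only [dLin, Finsupp.lsum_single]
  split_ifs with h
  · simp
  · simp

lemma dLin_dLin (n : ℕ) (v : S (n + 2) →₀ ℤ) : dLin n (dLin (n + 1) v) = 0 := by
  induction v using Finsupp.induction_linear with
  | zero => simp
  | add f g hf hg => simp [hf, hg]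
  | single p b =>
    rw [dLin_single]
    split_ifs with h
    · rw [map_smul, dLin_single]
      split_ifs with h'
      · exfalso
        obtain ⟨h1, h2⟩ := p.2
        dsimp only at h'
        omega
      · simp
    · simp

/-- The chain complex of abelian groups with `C_n` free on the pairs `(i, k)` with `i ≥ 1`,
`k ≥ 0`, `i + 2k = n` (so `C_0 = 0`), and differential `(i, k) ↦ 2·(i−1, k)` for `i` even,
`(i, k) ↦ 0` for `i` odd. -/
def AHComplex : ChainComplex (ModuleCat ℤ) ℕ :=
  ChainComplex.of (fun n => ModuleCat.of ℤ (S n →₀ ℤ))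
    (fun n => ModuleCat.ofHom (dLin n))
    (fun n => by
      ext : 1
      exact LinearMap.ext fun v => dLin_dLin n v)


/-- The generators of `S (2*i+1)` indexed by `Fin (i+1)`. -/
def eS (i : ℕ) : Fin (i + 1) ≃ S (2 * i + 1) where
  toFun j := ⟨(2 * (j : ℕ) + 1, i - (j : ℕ)), by constructor <;> [omega; (have := j.2; omega)]⟩
  invFun p := ⟨(p.1.1 - 1) / 2, by obtain ⟨h1, h2⟩ := p.2; omega⟩
  left_inv j := by
    have := j.2
    apply Fin.ext
    show (2 * (j : ℕ) + 1 - 1) / 2 = j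
    omega
  right_inv p := by
    obtain ⟨⟨a, k⟩, h1, h2⟩ := p
    apply Subtype.ext
    show (2 * ((a - 1) / 2) + 1, i - (a - 1) / 2) = (a, k)
    have : a % 2 = 1 := by omega
    rw [Prod.mk.injEq]
    omega

/-- The bijection `S (2*i+2) ≃ S (2*i+1)` given by `(a, k) ↦ (a-1, k)`. -/
def σS (i : ℕ) : S (2 * i + 2) ≃ S (2 * i + 1) where
  toFun p := ⟨(p.1.1 - 1, p.1.2), by obtain ⟨h1, h2⟩ := p.2; omega⟩
  invFun p := ⟨(p.1.1 + 1, p.1.2), by obtain ⟨h1, h2⟩ := p.2; omega⟩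
  left_inv p := by
    obtain ⟨⟨a, k⟩, h1, h2⟩ := p
    apply Subtype.ext
    show (a - 1 + 1, k) = (a, k)
    rw [Prod.mk.injEq]
    omega
  right_inv p := by
    obtain ⟨⟨a, k⟩, h1, h2⟩ := p
    apply Subtype.ext
    show (a + 1 - 1, k) = (a, k)
    rw [Prod.mk.injEq]
    omega

lemma dLin_odd (i : ℕ) :
    dLin (2 * i + 1) =
      (2 : ℤ) • (Finsupp.domLCongr (σS i) :
        (S (2 * i + 2) →₀ ℤ) ≃ₗ[ℤ] (S (2 * i + 1) →₀ ℤ)).toLinearMap := by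
  apply Finsupp.lhom_ext
  intro p b
  have hp := p.2
  have h2 : p.1.1 % 2 = 0 := by omega
  rw [dLin_single _ p b, dif_pos h2]
  simp only [LinearMap.smul_apply, LinearEquiv.coe_coe, Finsupp.domLCongr_apply,
    Finsupp.domCongr_apply, Finsupp.equivMapDomain_single]
  rfl

lemma dLin_even (i : ℕ) : dLin (2 * i) = 0 := by
  apply Finsupp.lhom_ext
  intro p b
  have hp := p.2
  have h2 : ¬ (p.1.1 % 2 = 0) := by omega
  rw [dLin_single _ p b, dif_neg h2]
  rfl

/-- Reduction mod 2 on coefficients, read off on the generators. -/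
def ψ (i : ℕ) : (S (2 * i + 1) →₀ ℤ) →ₗ[ℤ] (Fin (i + 1) → ZMod 2) :=
  LinearMap.pi fun j =>
    (Int.castAddHom (ZMod 2)).toIntLinearMap ∘ₗ Finsupp.lapply (eS i j)

lemma ψ_apply (i : ℕ) (v : S (2 * i + 1) →₀ ℤ) (j : Fin (i + 1)) :
    ψ i v j = ((v (eS i j) : ℤ) : ZMod 2) := rfl

lemma AHComplex_d (n : ℕ) : AHComplex.d (n + 1) n = ModuleCat.ofHom (dLin n) :=
  ChainComplex.of_d (fun n => ModuleCat.of ℤ (S n →₀ ℤ)) (fun n => ModuleCat.ofHom (dLin n)) n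

/-- An isomorphism in `ModuleCat ℤ` gives an additive equivalence of the underlying groups. -/
def isoAddEquiv {X Y : ModuleCat ℤ} (e : X ≅ Y) : X ≃+ Y where
  toFun := e.hom.hom
  invFun := e.inv.hom
  left_inv x := LinearMap.congr_fun (congrArg ModuleCat.Hom.hom e.hom_inv_id) x
  right_inv y := LinearMap.congr_fun (congrArg ModuleCat.Hom.hom e.inv_hom_id) y
  map_add' x y := map_add e.hom.hom x y

lemma AHComplex_homology_odd (i : ℕ) :
    Nonempty ((AHComplex.homology (2 * i + 1)) ≃+ (Fin (i + 1) → ZMod 2)) := by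
  classical
  set T := AHComplex.sc' (2 * i + 2) (2 * i + 1) (2 * i) with hT
  have hprev : (ComplexShape.down ℕ).prev (2 * i + 1) = 2 * i + 2 :=
    ChainComplex.prev ℕ (2 * i + 1)
  have hnext : (ComplexShape.down ℕ).next (2 * i + 1) = 2 * i :=
    ChainComplex.next_nat_succ (2 * i)
  have iso1 : AHComplex.homology (2 * i + 1) ≅ T.homology :=
    AHComplex.homologyIsoSc' (2 * i + 2) (2 * i + 1) (2 * i) hprev hnext
  have iso2 : T.homology ≅ T.moduleCatLeftHomologyData.H := T.moduleCatHomologyIso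
  have hTf : T.f = ModuleCat.ofHom (dLin (2 * i + 1)) := AHComplex_d (2 * i + 1)
  have hTg : T.g = ModuleCat.ofHom (dLin (2 * i)) := AHComplex_d (2 * i)
  -- the linear map from cycles to (ZMod 2)^(i+1)
  let Φ :=
    (ψ i).comp ((LinearMap.ker T.g.hom).subtype)
  let c2 : T.X₂ → (S (2 * i + 1) →₀ ℤ) := fun a => a
  have hΦ : ∀ (x : LinearMap.ker T.g.hom) (j : Fin (i + 1)),
      Φ x j = ((c2 x.1 (eS i j) : ℤ) : ZMod 2) := fun _ _ => rfl
  have hsurj : Function.Surjective Φ := by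
    intro y
    set v : S (2 * i + 1) →₀ ℤ :=
      ∑ j : Fin (i + 1), Finsupp.single (eS i j) ((y j).val : ℤ) with hv
    have hmem : (@id T.X₂ v) ∈ LinearMap.ker T.g.hom := by
      rw [LinearMap.mem_ker, hTg]
      show dLin (2 * i) v = 0
      rw [dLin_even]
      rfl
    refine ⟨⟨v, hmem⟩, ?_⟩
    funext j
    rw [hΦ]
    have : v (eS i j) = ((y j).val : ℤ) := by
      rw [hv, Finsupp.finset_sum_apply, Finset.sum_eq_single j]
      · simp
      · intro j' _ hj'
        rw [Finsupp.single_apply, if_neg (by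
          exact fun h => hj' ((eS i).injective h))]
      · simp
    rw [this]
    push_cast
    exact ZMod.natCast_rightInverse (y j)
  have hker : LinearMap.range T.moduleCatToCycles = LinearMap.ker Φ := by
    ext x
    constructor
    · rintro ⟨w, rfl⟩
      rw [LinearMap.mem_ker]
      funext j
      rw [hΦ]
      have : c2 (T.moduleCatToCycles w).1 = dLin (2 * i + 1) w := by
        show T.f.hom w = _
        rw [hTf]; rfl
      rw [this, dLin_odd]
      simp only [LinearMap.smul_apply, LinearEquiv.coe_coe, Finsupp.smul_apply, smul_eq_mul,
        Pi.zero_apply]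
      rw [ZMod.intCast_zmod_eq_zero_iff_dvd]
      exact ⟨_, rfl⟩
    · intro hx
      have hdvd : ∀ s : S (2 * i + 1), (2 : ℤ) ∣ c2 x.1 s := by
        intro s
        obtain ⟨j, rfl⟩ := (eS i).surjective s
        have := congrFun (LinearMap.mem_ker.1 hx) j
        rw [hΦ] at this
        exact (ZMod.intCast_zmod_eq_zero_iff_dvd _ 2).1 (by simpa using this)
      set u : S (2 * i + 1) →₀ ℤ :=
        Finsupp.mapRange (fun a : ℤ => a / 2) (by decide) (c2 x.1) with hu
      refine ⟨(Finsupp.domLCongr (σS i) :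
        (S (2 * i + 2) →₀ ℤ) ≃ₗ[ℤ] (S (2 * i + 1) →₀ ℤ)).symm u, ?_⟩
      apply Subtype.ext
      show T.f.hom _ = c2 x.1
      rw [hTf]
      show dLin (2 * i + 1) _ = _
      rw [dLin_odd]
      simp only [LinearMap.smul_apply, LinearEquiv.coe_coe, LinearEquiv.apply_symm_apply]
      ext s
      rw [Finsupp.smul_apply, hu, Finsupp.mapRange_apply, smul_eq_mul]
      exact Int.mul_ediv_cancel' (hdvd s)
  have eqv : (LinearMap.ker T.g.hom ⧸ LinearMap.range T.moduleCatToCycles) ≃ₗ[ℤ]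
      (Fin (i + 1) → ZMod 2) :=
    (Submodule.quotEquivOfEq _ _ hker).trans (Φ.quotKerEquivOfSurjective hsurj)
  exact ⟨(isoAddEquiv (iso1 ≪≫ iso2)).trans eqv.toAddEquiv⟩

lemma AHComplex_homology_even (j : ℕ) : Subsingleton (AHComplex.homology (2 * j + 2)) := by
  have hprev : (ComplexShape.down ℕ).prev (2 * j + 2) = 2 * j + 3 :=
    ChainComplex.prev ℕ (2 * j + 2)
  have hnext : (ComplexShape.down ℕ).next (2 * j + 2) = 2 * j + 1 :=
    ChainComplex.next_nat_succ (2 * j + 1)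
  have hexact : AHComplex.ExactAt (2 * j + 2) := by
    rw [AHComplex.exactAt_iff' (2 * j + 3) (2 * j + 2) (2 * j + 1) hprev hnext,
      ShortComplex.moduleCat_exact_iff]
    intro x hx
    have hTg : (AHComplex.sc' (2 * j + 3) (2 * j + 2) (2 * j + 1)).g =
        ModuleCat.ofHom (dLin (2 * j + 1)) := AHComplex_d (2 * j + 1)
    rw [hTg] at hx
    replace hx : dLin (2 * j + 1) x = 0 := hx
    rw [dLin_odd] at hx
    have h3 : (Finsupp.domLCongr (σS j) :
        (S (2 * j + 2) →₀ ℤ) ≃ₗ[ℤ] (S (2 * j + 1) →₀ ℤ)) x = 0 := by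
      ext s
      have h4 : ((2 : ℤ) • (Finsupp.domLCongr (σS j)) x) s = 0 := DFunLike.congr_fun hx s
      simp only [LinearMap.smul_apply, LinearEquiv.coe_coe, Finsupp.smul_apply,
        smul_eq_mul, Finsupp.coe_zero, Pi.zero_apply] at h4 ⊢
      omega
    have h5 : x = (0 : S (2 * j + 2) →₀ ℤ) :=
      (Finsupp.domLCongr (σS j) :
        (S (2 * j + 2) →₀ ℤ) ≃ₗ[ℤ] (S (2 * j + 1) →₀ ℤ)).injective
          (h3.trans (map_zero _).symm)
    refine ⟨0, ?_⟩
    rw [map_zero, h5]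
    rfl
  have hZ : Limits.IsZero (AHComplex.homology (2 * j + 2)) :=
    (AHComplex.exactAt_iff_isZero_homology (2 * j + 2)).1 hexact
  have e : (AHComplex.homology (2 * j + 2)) ≃+ (ModuleCat.of ℤ PUnit) :=
    isoAddEquiv (hZ.iso (ModuleCat.isZero_of_subsingleton (ModuleCat.of ℤ PUnit)))
  exact e.toEquiv.subsingleton

/-- For every `i ≥ 0`, the homology `H_{2i+1}` of the complex is isomorphic to
`(ℤ/2)^{i+1}`, and for every `i ≥ 1`, the homology `H_{2i}` is the zero group. -/
theorem AHComplex_homology :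
    (∀ i : ℕ, Nonempty ((AHComplex.homology (2 * i + 1)) ≃+ (Fin (i + 1) → ZMod 2))) ∧
      (∀ i : ℕ, 1 ≤ i → Subsingleton (AHComplex.homology (2 * i))) := by
  constructor
  · exact fun i => AHComplex_homology_odd i
  · intro i hi
    obtain ⟨j, rfl⟩ : ∃ j, i = j + 1 := ⟨i - 1, by omega⟩
    exact AHComplex_homology_even j

end
end
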